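/- For every integer k ≥ 4, the thin headless spider H_k satisfies γ^L(H_k) = k − 1 and γ^O(H_k) = k − 1. -/

import Mathlib

open Finset

namespace SepDom

variable {V : Type*} [Fintype V] [DecidableEq V]

/-- The closed neighborhood `N[v]` of a vertex as a `Finset`. -/
def closedNbhd (G : SimpleGraph V) [DecidableRel G.Adj] (v : V) : Finset V :=
  insert v (G.neighborFinset v)

/-- `C` is a dominating set: `N[v] ∩ C ≠ ∅` for all `v`. -/
def IsDomSet (G : SimpleGraph V) [DecidableRel G.Adj] (C : Finset V) : Prop :=
  ∀ v : V, (closedNbhd G v ∩ C).Nonempty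

/-- `C` is a total-dominating set: `N(v) ∩ C ≠ ∅` for all `v`. -/
def IsTotalDomSet (G : SimpleGraph V) [DecidableRel G.Adj] (C : Finset V) : Prop :=
  ∀ v : V, (G.neighborFinset v ∩ C).Nonempty

/-- `C` is a locating set (L-set): the sets `N(v) ∩ C`, `v ∉ C`, are pairwise distinct. -/
def IsLSet (G : SimpleGraph V) [DecidableRel G.Adj] (C : Finset V) : Prop :=
  ∀ u ∉ C, ∀ v ∉ C, G.neighborFinset u ∩ C = G.neighborFinset v ∩ C → u = v

/-- `C` is an open-separating set (O-set): the sets `N(v) ∩ C` are pairwise distinct. -/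
def IsOSet (G : SimpleGraph V) [DecidableRel G.Adj] (C : Finset V) : Prop :=
  ∀ u v : V, G.neighborFinset u ∩ C = G.neighborFinset v ∩ C → u = v

/-- `C` is a closed-separating set (I-set): the sets `N[v] ∩ C` are pairwise distinct. -/
def IsISet (G : SimpleGraph V) [DecidableRel G.Adj] (C : Finset V) : Prop :=
  ∀ u v : V, closedNbhd G u ∩ C = closedNbhd G v ∩ C → u = v

/-- `C` is a full-separating set (F-set): both open- and closed-separating. -/
def IsFSet (G : SimpleGraph V) [DecidableRel G.Adj] (C : Finset V) : Prop :=
  IsOSet G C ∧ IsISet G C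

/-- `G` has open twins: distinct non-adjacent vertices with equal open neighborhoods. -/
def HasOpenTwins (G : SimpleGraph V) [DecidableRel G.Adj] : Prop :=
  ∃ u v : V, u ≠ v ∧ ¬ G.Adj u v ∧ G.neighborFinset u = G.neighborFinset v

/-- `G` has closed twins: distinct adjacent vertices with equal closed neighborhoods. -/
def HasClosedTwins (G : SimpleGraph V) [DecidableRel G.Adj] : Prop :=
  ∃ u v : V, u ≠ v ∧ G.Adj u v ∧ closedNbhd G u = closedNbhd G v

/-- `G` has an isolated vertex: a vertex with empty open neighborhood. -/
def HasIsolated (G : SimpleGraph V) [DecidableRel G.Adj] : Prop :=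
  ∃ v : V, G.neighborFinset v = ∅

/-- The L-number: minimum cardinality of an L-set. -/
noncomputable def lNum (G : SimpleGraph V) [DecidableRel G.Adj] : ℕ :=
  sInf {n | ∃ C : Finset V, IsLSet G C ∧ C.card = n}

/-- The O-number: minimum cardinality of an O-set. -/
noncomputable def oNum (G : SimpleGraph V) [DecidableRel G.Adj] : ℕ :=
  sInf {n | ∃ C : Finset V, IsOSet G C ∧ C.card = n}

/-- The I-number: minimum cardinality of an I-set. -/
noncomputable def iNum (G : SimpleGraph V) [DecidableRel G.Adj] : ℕ :=
  sInf {n | ∃ C : Finset V, IsISet G C ∧ C.card = n}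

/-- The F-number: minimum cardinality of an F-set. -/
noncomputable def fNum (G : SimpleGraph V) [DecidableRel G.Adj] : ℕ :=
  sInf {n | ∃ C : Finset V, IsFSet G C ∧ C.card = n}

/-- The LD-number: minimum cardinality of an LD-code. -/
noncomputable def ldNum (G : SimpleGraph V) [DecidableRel G.Adj] : ℕ :=
  sInf {n | ∃ C : Finset V, IsDomSet G C ∧ IsLSet G C ∧ C.card = n}

/-- The OD-number: minimum cardinality of an OD-code. -/
noncomputable def odNum (G : SimpleGraph V) [DecidableRel G.Adj] : ℕ :=
  sInf {n | ∃ C : Finset V, IsDomSet G C ∧ IsOSet G C ∧ C.card = n}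

/-- The ID-number: minimum cardinality of an ID-code. -/
noncomputable def idNum (G : SimpleGraph V) [DecidableRel G.Adj] : ℕ :=
  sInf {n | ∃ C : Finset V, IsDomSet G C ∧ IsISet G C ∧ C.card = n}

/-- The FD-number: minimum cardinality of an FD-code. -/
noncomputable def fdNum (G : SimpleGraph V) [DecidableRel G.Adj] : ℕ :=
  sInf {n | ∃ C : Finset V, IsDomSet G C ∧ IsFSet G C ∧ C.card = n}

/-- The LTD-number: minimum cardinality of an LTD-code. -/
noncomputable def ltdNum (G : SimpleGraph V) [DecidableRel G.Adj] : ℕ :=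
  sInf {n | ∃ C : Finset V, IsTotalDomSet G C ∧ IsLSet G C ∧ C.card = n}

/-- The OTD-number: minimum cardinality of an OTD-code. -/
noncomputable def otdNum (G : SimpleGraph V) [DecidableRel G.Adj] : ℕ :=
  sInf {n | ∃ C : Finset V, IsTotalDomSet G C ∧ IsOSet G C ∧ C.card = n}

/-- The ITD-number: minimum cardinality of an ITD-code. -/
noncomputable def itdNum (G : SimpleGraph V) [DecidableRel G.Adj] : ℕ :=
  sInf {n | ∃ C : Finset V, IsTotalDomSet G C ∧ IsISet G C ∧ C.card = n}

/-- The FTD-number: minimum cardinality of an FTD-code. -/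
noncomputable def ftdNum (G : SimpleGraph V) [DecidableRel G.Adj] : ℕ :=
  sInf {n | ∃ C : Finset V, IsTotalDomSet G C ∧ IsFSet G C ∧ C.card = n}

end SepDom

open SepDom

/-- The thin headless spider `H_k`: vertices `Sum.inl i` form the clique `Q`,
vertices `Sum.inr i` form the stable set `S`, and `q_i` is adjacent to `s_j` iff `i = j`. -/
def thinSpider (k : ℕ) : SimpleGraph (Fin k ⊕ Fin k) where
  Adj u v :=
    match u, v with
    | Sum.inl i, Sum.inl j => i ≠ j
    | Sum.inl i, Sum.inr j => i = j
    | Sum.inr i, Sum.inl j => i = j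
    | Sum.inr _, Sum.inr _ => False
  symm := by
    constructor
    rintro (i | i) (j | j) h
    · exact Ne.symm h
    · exact Eq.symm h
    · exact Eq.symm h
    · exact h
  loopless := by
    constructor
    rintro (i | i) h
    · exact h rfl
    · exact h

instance thinSpider.adjDecidable (k : ℕ) : DecidableRel (thinSpider k).Adj := by
  rintro (i | i) (j | j)
  · exact inferInstanceAs (Decidable (i ≠ j))
  · exact inferInstanceAs (Decidable (i = j))
  · exact inferInstanceAs (Decidable (i = j))
  · exact inferInstanceAs (Decidable False)


section Aux

variable {k : ℕ}

lemma thinSpider_adj_ll (i j : Fin k) :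
    (thinSpider k).Adj (Sum.inl i) (Sum.inl j) ↔ i ≠ j := Iff.rfl

lemma thinSpider_adj_lr (i j : Fin k) :
    (thinSpider k).Adj (Sum.inl i) (Sum.inr j) ↔ i = j := Iff.rfl

lemma thinSpider_adj_rl (i j : Fin k) :
    (thinSpider k).Adj (Sum.inr i) (Sum.inl j) ↔ i = j := Iff.rfl

lemma thinSpider_adj_rr (i j : Fin k) :
    ¬ (thinSpider k).Adj (Sum.inr i) (Sum.inr j) := fun h => h

lemma exists_ne3 (hk : 4 ≤ k) (a b c : Fin k) :
    ∃ t : Fin k, t ≠ a ∧ t ≠ b ∧ t ≠ c := by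
  have hcard : ({a, b, c} : Finset (Fin k)).card < (Finset.univ : Finset (Fin k)).card := by
    have h3 : ({a, b, c} : Finset (Fin k)).card ≤ 3 := by
      apply le_trans (Finset.card_insert_le _ _)
      have := Finset.card_insert_le b ({c} : Finset (Fin k))
      simp at this ⊢
      omega
    simp only [Finset.card_univ, Fintype.card_fin]
    omega
  have hns : ¬ (Finset.univ : Finset (Fin k)) ⊆ {a, b, c} := fun h =>
    absurd (Finset.card_le_card h) (by omega)
  obtain ⟨t, _, ht⟩ := Finset.not_subset.mp hns
  refine ⟨t, ?_, ?_, ?_⟩ <;> (intro h; apply ht; simp [h])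

/-- the distinguished excluded index -/
def i0 (hk : 4 ≤ k) : Fin k := ⟨0, by omega⟩

/-- the witness code: all clique vertices except `q_{i0}` -/
def C0 (hk : 4 ≤ k) : Finset (Fin k ⊕ Fin k) :=
  ((Finset.univ : Finset (Fin k)).erase (i0 hk)).image Sum.inl

lemma mem_C0 (hk : 4 ≤ k) (x : Fin k ⊕ Fin k) :
    x ∈ C0 hk ↔ ∃ j : Fin k, j ≠ i0 hk ∧ x = Sum.inl j := by
  simp [C0, eq_comm, and_comm]

lemma C0_card (hk : 4 ≤ k) : (C0 hk).card = k - 1 := by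
  rw [C0, Finset.card_image_of_injective _ Sum.inl_injective,
    Finset.card_erase_of_mem (Finset.mem_univ _)]
  simp

lemma mem_inter_C0 (hk : 4 ≤ k) (u : Fin k ⊕ Fin k) (t : Fin k) :
    Sum.inl t ∈ (thinSpider k).neighborFinset u ∩ C0 hk ↔
      (thinSpider k).Adj u (Sum.inl t) ∧ t ≠ i0 hk := by
  simp only [Finset.mem_inter, SimpleGraph.mem_neighborFinset, mem_C0 hk]
  constructor
  · rintro ⟨h1, j, hj, hjt⟩
    cases Sum.inl_injective hjt.symm
    exact ⟨h1, hj⟩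
  · rintro ⟨h1, h2⟩
    exact ⟨h1, t, h2, rfl⟩

lemma C0_isOSet (hk : 4 ≤ k) : IsOSet (thinSpider k) (C0 hk) := by
  rintro (i | i) (j | j) h
  · -- inl inl
    congr 1
    by_contra hij
    rcases eq_or_ne i (i0 hk) with hi | hi
    · have hj : j ≠ i0 hk := fun hj => hij (hi.trans hj.symm)
      have h1 : Sum.inl j ∈ (thinSpider k).neighborFinset (Sum.inl i) ∩ C0 hk :=
        (mem_inter_C0 hk _ _).mpr ⟨fun e => hij e, hj⟩
      rw [h] at h1
      exact ((mem_inter_C0 hk _ _).mp h1).1 rfl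
    · have h1 : Sum.inl i ∈ (thinSpider k).neighborFinset (Sum.inl j) ∩ C0 hk :=
        (mem_inter_C0 hk _ _).mpr ⟨fun e => hij e.symm, hi⟩
      rw [← h] at h1
      exact ((mem_inter_C0 hk _ _).mp h1).1 rfl
  · -- inl inr : impossible
    exfalso
    obtain ⟨t, hti, htj, ht0⟩ := exists_ne3 hk i j (i0 hk)
    have h1 : Sum.inl t ∈ (thinSpider k).neighborFinset (Sum.inl i) ∩ C0 hk :=
      (mem_inter_C0 hk _ _).mpr ⟨fun e => hti (e.symm ▸ rfl), ht0⟩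
    rw [h] at h1
    exact htj (((mem_inter_C0 hk _ _).mp h1).1.symm ▸ rfl)
  · -- inr inl : impossible
    exfalso
    obtain ⟨t, hti, htj, ht0⟩ := exists_ne3 hk i j (i0 hk)
    have h1 : Sum.inl t ∈ (thinSpider k).neighborFinset (Sum.inl j) ∩ C0 hk :=
      (mem_inter_C0 hk _ _).mpr ⟨fun e => htj (e.symm ▸ rfl), ht0⟩
    rw [← h] at h1
    exact hti (((mem_inter_C0 hk _ _).mp h1).1.symm ▸ rfl)
  · -- inr inr
    congr 1
    by_contra hij
    rcases eq_or_ne i (i0 hk) with hi | hi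
    · have hj : j ≠ i0 hk := fun hj => hij (hi.trans hj.symm)
      have h1 : Sum.inl j ∈ (thinSpider k).neighborFinset (Sum.inr j) ∩ C0 hk :=
        (mem_inter_C0 hk _ _).mpr ⟨rfl, hj⟩
      rw [← h] at h1
      exact hij ((mem_inter_C0 hk _ _).mp h1).1
    · have h1 : Sum.inl i ∈ (thinSpider k).neighborFinset (Sum.inr i) ∩ C0 hk :=
        (mem_inter_C0 hk _ _).mpr ⟨rfl, hi⟩
      rw [h] at h1
      exact hij ((mem_inter_C0 hk _ _).mp h1).1.symm
  
lemma lset_lower (hk : 4 ≤ k) (C : Finset (Fin k ⊕ Fin k))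
    (hC : IsLSet (thinSpider k) C) : k - 1 ≤ C.card := by
  by_contra hlt
  push_neg at hlt
  -- indices covered by C
  set I : Finset (Fin k) := Finset.univ.filter
    (fun i => Sum.inl i ∈ C ∨ Sum.inr i ∈ C) with hI
  have hIcard : I.card ≤ C.card := by
    apply Finset.card_le_card_of_injOn
      (fun i => if Sum.inl i ∈ C then Sum.inl i else Sum.inr i)
    · intro i hi
      rw [hI, Finset.mem_coe, Finset.mem_filter] at hi
      by_cases h : Sum.inl i ∈ C
      · simpa [h]
      · simp only [h, if_false]
        exact hi.2.resolve_left h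
    · intro i _ j _ hij
      by_cases h1 : Sum.inl i ∈ C <;> by_cases h2 : Sum.inl j ∈ C <;>
        simp [h1, h2] at hij <;> exact hij
  have hIc : 2 ≤ (Finset.univ \ I).card := by
    have := Finset.card_sdiff_add_card_eq_card (Finset.subset_univ I)
    have hu : (Finset.univ : Finset (Fin k)).card = k := by simp
    omega
  obtain ⟨i, hi, j, hj, hij⟩ := Finset.one_lt_card.mp (by omega : 1 < (Finset.univ \ I).card)
  have hmem : ∀ t : Fin k, t ∈ Finset.univ \ I →
      Sum.inl t ∉ C ∧ Sum.inr t ∉ C ∧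
        (thinSpider k).neighborFinset (Sum.inr t) ∩ C = ∅ := by
    intro t ht
    simp only [Finset.mem_sdiff, hI, Finset.mem_filter, Finset.mem_univ, true_and,
      not_or] at ht
    refine ⟨ht.1, ht.2, ?_⟩
    ext x
    simp only [Finset.mem_inter, SimpleGraph.mem_neighborFinset, Finset.notMem_empty,
      iff_false, not_and]
    rintro hadj
    rcases x with a | a
    · have : t = a := hadj
      subst this
      exact ht.1
    · exact absurd hadj (thinSpider_adj_rr t a)
  obtain ⟨hi1, hi2, hi3⟩ := hmem i hi
  obtain ⟨hj1, hj2, hj3⟩ := hmem j hj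
  have := hC (Sum.inr i) hi2 (Sum.inr j) hj2 (by rw [hi3, hj3])
  exact hij (Sum.inr_injective this)

end Aux

theorem thinSpider_lNum_oNum (k : ℕ) (hk : 4 ≤ k) :
    lNum (thinSpider k) = k - 1 ∧ oNum (thinSpider k) = k - 1 := by
  have hO : IsOSet (thinSpider k) (C0 hk) := C0_isOSet hk
  have hL : IsLSet (thinSpider k) (C0 hk) := fun u _ v _ h => hO u v h
  have hcard := C0_card hk
  constructor
  · apply le_antisymm
    · exact Nat.sInf_le ⟨C0 hk, hL, hcard⟩
    · refine le_csInf ⟨k - 1, C0 hk, hL, hcard⟩ ?_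
      rintro n ⟨C, hC, rfl⟩
      exact lset_lower hk C hC
  · apply le_antisymm
    · exact Nat.sInf_le ⟨C0 hk, hO, hcard⟩
    · refine le_csInf ⟨k - 1, C0 hk, hO, hcard⟩ ?_
      rintro n ⟨C, hC, rfl⟩
      exact lset_lower hk C (fun u _ v _ h => hC u v h)
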